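/- In the normalized setting below, suppose |s| ≤ 3δ/4 and ξ ∈ Ω. Then s − s_cr(ξ) = ⟨γ'(s),ξ⟩ / ⟨γ''(s),ξ⟩ + E₁ with |E₁| ≤ 6M (s − s_cr(ξ))². Moreover, if s^μ ∈ [−δ,δ], a^μ ∈ 𝔖_k(r₀, s^μ) with r₀ ≤ min{10^{−3}M^{−2}, δ/4}, and (ξ,τ) ∈ supp(a^μ), then U_μ(ξ,τ) = τ + ⟨γ(s_cr(ξ)),ξ⟩ + E₂ with |E₂| ≤ 13M |s_cr(ξ) − s^μ|³ |ξ|, where U_μ(ξ,τ) = τ + ⟨γ(s^μ),ξ⟩ − (1/2)⟨γ'(s^μ),ξ⟩² / ⟨γ''(s^μ),ξ⟩. -/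

import Mathlib

noncomputable section
open MeasureTheory Real Complex
open scoped RealInnerProductSpace ENNReal NNReal

/-- Euclidean space `ℝⁿ`. -/
abbrev E (n : ℕ) : Type := EuclideanSpace ℝ (Fin n)

/-- The vector `(x, y, z) ∈ ℝ³`. -/
def vec3 (x y z : ℝ) : E 3 := (WithLp.equiv 2 (Fin 3 → ℝ)).symm ![x, y, z]

/-- Cross product in `ℝ³`. -/
def cross3 (a b : E 3) : E 3 :=
  vec3 (a 1 * b 2 - a 2 * b 1) (a 2 * b 0 - a 0 * b 2) (a 0 * b 1 - a 1 * b 0)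

/-- `L^p` (quasi-)norm, `0 < p < ∞` entered as a real number. -/
def eLp {V F : Type*} [MeasureSpace V] [NormedAddCommGroup F] (f : V → F) (p : ℝ) : ℝ≥0∞ :=
  eLpNorm f (ENNReal.ofReal p) volume

/-- The operator given on the Fourier side by multiplication with `m`. -/
def mOp {n : ℕ} (m : E n → ℂ) (f : E n → ℂ) : E n → ℂ :=
  FourierTransformInv.fourierInv (fun ξ => m ξ * FourierTransform.fourier f ξ)

/-- `C` is a bound for the `L^p → L^p` operator norm of the Fourier multiplier operator
associated to `m` (tested on Schwartz functions). -/
def IsMultiplierBound {n : ℕ} (m : E n → ℂ) (p : ℝ≥0∞) (C : ℝ) : Prop :=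
  ∀ f : SchwartzMap (E n) ℂ,
    eLpNorm (mOp m ⇑f) p volume ≤ ENNReal.ofReal C * eLpNorm (⇑f) p volume

/-- The `M^p` multiplier norm. -/
def multiplierNorm {n : ℕ} (m : E n → ℂ) (p : ℝ≥0∞) : ℝ :=
  sInf {C : ℝ | 0 ≤ C ∧ IsMultiplierBound m p C}

/-- The Bessel potential (Sobolev) `L^p_α` norm. -/
def sobolevNorm {n : ℕ} (f : E n → ℂ) (p α : ℝ) : ℝ≥0∞ :=
  eLp (FourierTransformInv.fourierInv
    (fun ξ => ((((1 + ‖ξ‖ ^ 2) ^ (α / 2) : ℝ)) : ℂ) * FourierTransform.fourier f ξ)) p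

section Plates

/-- `u₁(α) = (g(α), 1)`. -/
def uOne (g : ℝ → ℝ × ℝ) (α : ℝ) : E 3 := vec3 (g α).1 (g α).2 1

/-- `u₂(α) = (g'(α), 0)`; the derivative is supplied as the function `g'`. -/
def uTwo (g' : ℝ → ℝ × ℝ) (α : ℝ) : E 3 := vec3 (g' α).1 (g' α).2 0

/-- `u₃ = u₁ × u₂`. -/
def uThree (g g' : ℝ → ℝ × ℝ) (α : ℝ) : E 3 := cross3 (uOne g α) (uTwo g' α)

/-- The `(δ, λ)`-plate at `α` associated to the planar curve `g` (with derivative `g'`). -/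
def plateSet (g g' : ℝ → ℝ × ℝ) (δ lam α : ℝ) : Set (E 3) :=
  {ξ | lam / 2 ≤ |⟪uOne g α, ξ⟫| ∧ |⟪uOne g α, ξ⟫| ≤ 2 * lam ∧
       |⟪uTwo g' α, ξ - ξ 2 • uOne g α⟫| ≤ lam * δ ^ ((1:ℝ)/2) ∧
       |⟪uThree g g' α, ξ⟫| ≤ lam * δ}

/-- An admissible bump function associated to the plate `R^α_{δ,λ}`. -/
def IsAdmissibleBump (g g' : ℝ → ℝ × ℝ) (δ lam α : ℝ) (φ : E 3 → ℂ) : Prop :=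
  ContDiff ℝ (⊤ : ℕ∞) φ ∧ tsupport φ ⊆ plateSet g g' δ lam α ∧
  ∀ n₁ n₂ n₃ : ℕ, n₁ + n₂ + n₃ ≤ 4 → ∀ ξ : E 3,
    ‖iteratedFDeriv ℝ (n₁ + n₂ + n₃) φ ξ
        (fun i => if (i : ℕ) < n₁ then uOne g α
          else if (i : ℕ) < n₁ + n₂ then uTwo g' α else uThree g g' α)‖
      ≤ lam ^ (-(n₁ + n₂ + n₃ : ℝ)) * δ ^ (-(n₂ : ℝ) / 2) * δ ^ (-(n₃ : ℝ))

/-- A `(δ, λ, θ)`-plate family with separation `sep`: the angular parameters `αs` lie in `I`,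
are `sep`-separated and spread over an interval of length at most `θ`. -/
def IsPlateFamily (I : Set ℝ) (θ sep : ℝ) {N : ℕ} (αs : Fin N → ℝ) : Prop :=
  (∀ i, αs i ∈ I) ∧ (∀ i j, i ≠ j → sep ≤ |αs i - αs j|) ∧ ∀ i j, |αs i - αs j| ≤ θ

/-- The unit circle and its derivative. -/
def circleG (α : ℝ) : ℝ × ℝ := (Real.cos (2 * π * α), Real.sin (2 * π * α))

def circleG' (α : ℝ) : ℝ × ℝ := (-(2 * π) * Real.sin (2 * π * α), 2 * π * Real.cos (2 * π * α))

/-- Wolff's plate decomposition inequality at exponent `p`, for the light cone. -/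
def WolffEstimateHolds (p : ℝ) : Prop :=
  ∀ ε > 0, ∃ A > 0, ∀ δ lam : ℝ, 0 < δ → δ ≤ 1 → 1 ≤ lam →
    ∀ (N : ℕ) (αs : Fin N → ℝ) (φ : Fin N → E 3 → ℂ) (f : Fin N → SchwartzMap (E 3) ℂ),
      IsPlateFamily (Set.Icc (-(1/2) : ℝ) (1/2)) 1 (δ ^ ((1:ℝ)/2)) αs →
      (∀ i, IsAdmissibleBump circleG circleG' δ lam (αs i) (φ i)) →
      eLp (fun x => ∑ i, mOp (φ i) (⇑(f i)) x) p
        ≤ ENNReal.ofReal (A * δ ^ (2/p - 1/2 - ε)) *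
            (∑ i, eLp (⇑(f i)) p ^ p) ^ (1/p)

/-- The Wolff exponent `p_W`. -/
def wolffExponent : ℝ := sInf {p₀ : ℝ | ∀ p, p₀ < p → WolffEstimateHolds p}

end Plates

section Curves

/-- The type condition of order `m` at the point `s` of a curve: for every unit `ξ`,
some derivative `γ^{(j)}(s)`, `1 ≤ j ≤ m`, is non-orthogonal to `ξ`. -/
def TypeCondAt (γ : ℝ → E 3) (I : Set ℝ) (s : ℝ) (m : ℕ) : Prop :=
  ∀ ξ : E 3, ‖ξ‖ = 1 → 0 < ∑ j ∈ Finset.Icc 1 m, |⟪iteratedDerivWithin j γ I s, ξ⟫|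

/-- `γ` is of finite type (with order `n`) on `I`:
`∑_{j=1}^n |⟨γ^{(j)}(s), ξ⟩| ≥ c` for all `s ∈ I` and all unit vectors `ξ`. -/
def IsFiniteTypeOfOrder (γ : ℝ → E 3) (I : Set ℝ) (n : ℕ) : Prop :=
  ∃ c > 0, ∀ s ∈ I, ∀ ξ : E 3, ‖ξ‖ = 1 →
    c ≤ ∑ j ∈ Finset.Icc 1 n, |⟪iteratedDerivWithin j γ I s, ξ⟫|

/-- `γ` has maximal type `n` on `I`: the finite type condition holds at order `n`
(uniformly), and `n` is the supremum over `s ∈ I` of the types at `s`. -/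
def IsMaximalType (γ : ℝ → E 3) (I : Set ℝ) (n : ℕ) : Prop :=
  IsFiniteTypeOfOrder γ I n ∧ ∀ m, m < n → ∃ s ∈ I, ¬ TypeCondAt γ I s m

/-- The averaging operator `𝒜_t f (x) = ∫ f(x - tγ(s)) χ(s) ds`. -/
def avgOp (γ : ℝ → E 3) (χ : ℝ → ℝ) (t : ℝ) (f : E 3 → ℂ) (x : E 3) : ℂ :=
  ∫ s : ℝ, f (x - t • γ s) * (χ s : ℂ)

/-- Determinant of three vectors in `ℝ³`. -/
def det3 (v₁ v₂ v₃ : E 3) : ℝ :=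
  v₁ 0 * (v₂ 1 * v₃ 2 - v₂ 2 * v₃ 1) - v₁ 1 * (v₂ 0 * v₃ 2 - v₂ 2 * v₃ 0)
    + v₁ 2 * (v₂ 0 * v₃ 1 - v₂ 1 * v₃ 0)

end Curves

section HigherDim

/-- Classical Fourier transform `f̂(ξ) = ∫ e^{-i⟨x,ξ⟩} f(x) dx`. -/
def FTc {n : ℕ} (f : E n → ℂ) (ξ : E n) : ℂ :=
  ∫ x : E n, Complex.exp (-(Complex.I) * ((⟪x, ξ⟫ : ℝ) : ℂ)) * f x

/-- `𝔄_Γ[a, f](x,t) = (2π)^{-d} ∬ a(u,t,ξ) e^{i⟨x,ξ⟩ - it⟨Γ(u),ξ⟩} f̂(ξ) du dξ`. -/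
def AGamma {n : ℕ} (Γ : ℝ → E n) (a : ℝ → ℝ → E n → ℂ) (f : E n → ℂ) : E n × ℝ → ℂ :=
  fun z => (((2 * π) ^ (-(n : ℝ)) : ℝ) : ℂ) *
    ∫ ξ : E n, (∫ u : ℝ, a u z.2 ξ *
        Complex.exp (Complex.I * (((⟪z.1, ξ⟫ - z.2 * ⟪Γ u, ξ⟫ : ℝ)) : ℂ))) * FTc f ξ

/-- Subtracting the component along the unit vector `w`:
the orthogonal projection onto `(ℝ w)^⊥`. -/
def projPerp {n : ℕ} (w v : E n) : E n := v - ⟪v, w⟫ • w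

/-- The map `L_{r,s} = L^{(1)}_s ∘ L^{(2)}_{r,s}` on `ℝ^{d+1}`, where `L^{(2)}_{r,s}` dilates
by `r²` in the direction `e_{d+1}`, by `r` in the direction `(γ'(s),0)` and fixes the
orthogonal complement, and `L^{(1)}_s (ξ,τ) = (ξ, τ - ⟨γ(s),ξ⟩)` is the shear. -/
def Lmap {n : ℕ} (γ : ℝ → E n) (r s : ℝ) (Ξ : E n × ℝ) : E n × ℝ :=
  (Ξ.1 + ((r - 1) * ⟪Ξ.1, deriv γ s⟫) • deriv γ s,
    r ^ 2 * Ξ.2 - ⟪γ s, Ξ.1 + ((r - 1) * ⟪Ξ.1, deriv γ s⟫) • deriv γ s⟫)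

/-- Euclidean norm of `Ξ = (ξ, τ) ∈ ℝ^{d+1}`. -/
def enormP {n : ℕ} (Ξ : E n × ℝ) : ℝ := Real.sqrt (‖Ξ.1‖ ^ 2 + Ξ.2 ^ 2)

/-- The standard coordinate directions of `ℝ^{d+1} = ℝ^d × ℝ`. -/
def stdDirs (n : ℕ) : Set (E n × ℝ) :=
  {w | (∃ i : Fin n, w = (EuclideanSpace.single i (1 : ℝ), 0)) ∨ w = (0, 1)}

/-- The multiplier class `𝒮_k(r,s)`: multipliers `m(ξ,τ)` supported in
`{2^{k-1} ≤ |ξ| ≤ 2^{k+1}, |⟨γ'(s),ξ⟩| ≤ 2^{k+3} r, |τ + ⟨γ(s),ξ⟩| ≤ 2^{k+4} r²}`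
with `|∂_Ξ^α (m(L_{r,s} Ξ))| ≤ |Ξ|^{-|α|}` for `|α| ≤ d+2`. -/
def SClass {n : ℕ} (γ : ℝ → E n) (k : ℕ) (r s : ℝ) (m : E n × ℝ → ℂ) : Prop :=
  (∀ Ξ : E n × ℝ, m Ξ ≠ 0 →
    (2:ℝ) ^ ((k:ℝ) - 1) ≤ ‖Ξ.1‖ ∧ ‖Ξ.1‖ ≤ (2:ℝ) ^ ((k:ℝ) + 1) ∧
    |⟪deriv γ s, Ξ.1⟫| ≤ (2:ℝ) ^ ((k:ℝ) + 3) * r ∧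
    |Ξ.2 + ⟪γ s, Ξ.1⟫| ≤ (2:ℝ) ^ ((k:ℝ) + 4) * r ^ 2) ∧
  (∀ N : ℕ, N ≤ n + 2 → ∀ v : Fin N → E n × ℝ, (∀ i, v i ∈ stdDirs n) →
    ∀ Ξ : E n × ℝ,
      ‖iteratedFDeriv ℝ N (fun Ξ' => m (Lmap γ r s Ξ')) Ξ v‖ ≤ enormP Ξ ^ (-(N : ℝ)))

/-- The symbol class `𝔖_k(r, s₀)`: symbols `a(s,t,ξ,τ)` supported in
`[s₀-2r, s₀+2r] × [1/2,2] × Ω_k × ℝ` with `∂_s^{i₁} ∂_t^{i₂} a(s,t,·) ∈ 𝒮_k(r,s₀)`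
for `i₁, i₂ ∈ {0,1}`. -/
def FSClass {n : ℕ} (γ : ℝ → E n) (Ω : Set (E n)) (k : ℕ) (r s₀ : ℝ)
    (a : ℝ → ℝ → E n × ℝ → ℂ) : Prop :=
  (∀ s t Ξ, a s t Ξ ≠ 0 → |s - s₀| ≤ 2 * r ∧ t ∈ Set.Icc (1/2 : ℝ) 2 ∧ Ξ.1 ∈ Ω ∧
    (2:ℝ) ^ ((k:ℝ) - 1) ≤ ‖Ξ.1‖ ∧ ‖Ξ.1‖ ≤ (2:ℝ) ^ ((k:ℝ) + 1)) ∧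
  (∀ i₁ i₂ : ℕ, i₁ ≤ 1 → i₂ ≤ 1 → ∀ s t : ℝ,
    SClass γ k r s₀ (fun Ξ => iteratedDeriv i₁ (fun s' => iteratedDeriv i₂
      (fun t' => a s' t' Ξ) t) s))

/-- `𝔪[a](ξ,τ) = ∬ e^{-it(τ + ⟨γ(s),ξ⟩)} a(s,t,ξ,τ) ds dt`. -/
def mfrak {n : ℕ} (γ : ℝ → E n) (a : ℝ → ℝ → E n × ℝ → ℂ) (Ξ : E n × ℝ) : ℂ :=
  ∫ s : ℝ, ∫ t : ℝ,
    Complex.exp (-(Complex.I) * ((t * (Ξ.2 + ⟪γ s, Ξ.1⟫) : ℝ) : ℂ)) * a s t Ξ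

/-- `𝒯[a,f](x,t) = (2π)^{-d-1} ∬ e^{i(⟨x,ξ⟩ + tτ)} 𝔪[a](ξ,τ) f̂(ξ) dξ dτ`. -/
def Tcal {n : ℕ} (γ : ℝ → E n) (a : ℝ → ℝ → E n × ℝ → ℂ) (f : E n → ℂ) : E n × ℝ → ℂ :=
  fun z => (((2 * π) ^ (-(n : ℝ) - 1) : ℝ) : ℂ) *
    ∫ Ξ : E n × ℝ, Complex.exp (Complex.I * ((⟪z.1, Ξ.1⟫ + z.2 * Ξ.2 : ℝ) : ℂ)) *
      mfrak γ a Ξ * FTc f Ξ.1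

/-- The kernel `K_s[m](x,t') = ∭ e^{i⟨x,ξ⟩ + it'τ} e^{-it(τ + ⟨γ(s),ξ⟩)} m(t,ξ,τ) dξ dτ dt`. -/
def Ksm {n : ℕ} (γ : ℝ → E n) (s : ℝ) (m : ℝ → E n × ℝ → ℂ) (x : E n) (t' : ℝ) : ℂ :=
  ∫ t in Set.Icc (1/2 : ℝ) 2, ∫ Ξ : E n × ℝ,
    Complex.exp (Complex.I * ((⟪x, Ξ.1⟫ + t' * Ξ.2 : ℝ) : ℂ)) *
      Complex.exp (-(Complex.I) * ((t * (Ξ.2 + ⟪γ s, Ξ.1⟫) : ℝ) : ℂ)) * m t Ξ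

end HigherDim

private lemma abs_sub_le_of_uIcc {a b t : ℝ} (ht : t ∈ Set.uIcc a b) : |t - a| ≤ |b - a| := by
  rcases le_total a b with h | h
  · rw [Set.uIcc_of_le h] at ht
    rw [_root_.abs_of_nonneg (by linarith [ht.1] : (0:ℝ) ≤ t - a), _root_.abs_of_nonneg (by linarith)]
    linarith [ht.2]
  · rw [Set.uIcc_of_ge h] at ht
    rw [_root_.abs_of_nonpos (by linarith [ht.2] : t - a ≤ 0), _root_.abs_of_nonpos (by linarith)]
    linarith [ht.1]

private lemma taylor1 {g g' g'' : ℝ → ℝ} {C a b : ℝ}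
    (hg : ∀ t, HasDerivAt g (g' t) t) (hg' : ∀ t, HasDerivAt g' (g'' t) t)
    (hC : ∀ t ∈ Set.uIcc a b, |g'' t| ≤ C) :
    |g b - g a - (b - a) * g' a| ≤ C * (b - a) ^ 2 := by
  have hconv : Convex ℝ (Set.uIcc a b) := convex_uIcc a b
  have hC0 : 0 ≤ C := le_trans (abs_nonneg _) (hC a Set.left_mem_uIcc)
  have key : ∀ t ∈ Set.uIcc a b, |g' t - g' a| ≤ C * |b - a| := by
    intro t ht
    have h1 : ‖g' t - g' a‖ ≤ C * ‖t - a‖ :=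
      hconv.norm_image_sub_le_of_norm_hasDerivWithin_le
        (fun x _ => (hg' x).hasDerivWithinAt)
        (fun x hx => by simpa [Real.norm_eq_abs] using hC x hx)
        Set.left_mem_uIcc ht
    have h2 : |t - a| ≤ |b - a| := abs_sub_le_of_uIcc ht
    rw [Real.norm_eq_abs, Real.norm_eq_abs] at h1
    nlinarith
  have h3 : ‖(g b - b * g' a) - (g a - a * g' a)‖ ≤ (C * |b - a|) * ‖b - a‖ :=
    hconv.norm_image_sub_le_of_norm_hasDerivWithin_le
      (f' := fun x => g' x - g' a)
      (fun x _ => (((hg x).sub (by simpa using (hasDerivAt_id x).mul_const (g' a))).hasDerivWithinAt))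
      (fun x hx => by simpa [Real.norm_eq_abs] using key x hx)
      Set.left_mem_uIcc Set.right_mem_uIcc
  have h4 : (g b - b * g' a) - (g a - a * g' a) = g b - g a - (b - a) * g' a := by ring
  rw [h4, Real.norm_eq_abs, Real.norm_eq_abs] at h3
  calc |g b - g a - (b - a) * g' a| ≤ C * |b - a| * |b - a| := h3
    _ = C * (|b - a| * |b - a|) := by ring
    _ = C * ((b - a) * (b - a)) := by rw [abs_mul_abs_self]
    _ = C * (b - a) ^ 2 := by ring

private lemma taylor2 {g g' g'' g''' : ℝ → ℝ} {C a b : ℝ}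
    (hg : ∀ t, HasDerivAt g (g' t) t) (hg' : ∀ t, HasDerivAt g' (g'' t) t)
    (hg'' : ∀ t, HasDerivAt g'' (g''' t) t)
    (hC : ∀ t ∈ Set.uIcc a b, |g''' t| ≤ C) :
    |g b - g a - (b - a) * g' a - (b - a) ^ 2 / 2 * g'' a| ≤ C * |b - a| ^ 3 := by
  have hconv : Convex ℝ (Set.uIcc a b) := convex_uIcc a b
  have hC0 : 0 ≤ C := le_trans (abs_nonneg _) (hC a Set.left_mem_uIcc)
  have hψd : ∀ x : ℝ, HasDerivAt (fun t => g t - t * g' a - (t^2/2 - a*t) * g'' a)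
      (g' x - g' a - (x - a) * g'' a) x := by
    intro x
    have h2 : HasDerivAt (fun t : ℝ => t^2/2 - a*t) (x - a) x := by
      have := ((hasDerivAt_pow 2 x).div_const 2).sub ((hasDerivAt_id' x).const_mul a)
      exact this.congr_deriv (by push_cast; ring)
    exact ((hg x).sub (by simpa using (hasDerivAt_id x).mul_const (g' a))).sub (h2.mul_const _)
  have key : ∀ t ∈ Set.uIcc a b, |g' t - g' a - (t - a) * g'' a| ≤ C * (b - a) ^ 2 := by
    intro t ht
    have h1 : |g' t - g' a - (t - a) * g'' a| ≤ C * (t - a) ^ 2 :=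
      taylor1 hg' hg'' (fun u hu => hC u (Set.uIcc_subset_uIcc Set.left_mem_uIcc ht hu))
    have h2 : |t - a| ≤ |b - a| := abs_sub_le_of_uIcc ht
    have hsq := mul_self_le_mul_self (abs_nonneg (t-a)) h2
    rw [abs_mul_abs_self, abs_mul_abs_self] at hsq
    nlinarith [h1, hsq, hC0]
  have h3 : ‖(g b - b * g' a - (b^2/2 - a*b) * g'' a) - (g a - a * g' a - (a^2/2 - a*a) * g'' a)‖
      ≤ (C * (b - a) ^ 2) * ‖b - a‖ :=
    hconv.norm_image_sub_le_of_norm_hasDerivWithin_le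
      (f' := fun x => g' x - g' a - (x - a) * g'' a)
      (fun x _ => (hψd x).hasDerivWithinAt)
      (fun x hx => by simpa [Real.norm_eq_abs] using key x hx)
      Set.left_mem_uIcc Set.right_mem_uIcc
  have h4 : (g b - b * g' a - (b^2/2 - a*b) * g'' a) - (g a - a * g' a - (a^2/2 - a*a) * g'' a)
      = g b - g a - (b - a) * g' a - (b - a) ^ 2 / 2 * g'' a := by ring
  rw [h4, Real.norm_eq_abs, Real.norm_eq_abs] at h3
  calc |g b - g a - (b - a) * g' a - (b - a) ^ 2 / 2 * g'' a|
      ≤ C * (b - a) ^ 2 * |b - a| := h3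
    _ = C * (|b - a| * |b - a|) * |b - a| := by rw [abs_mul_abs_self]; ring
    _ = C * |b - a| ^ 3 := by ring

private lemma mvt_lower_aux {g g' : ℝ → ℝ} {c a b : ℝ} (hab : a < b)
    (hg : ∀ t, HasDerivAt g (g' t) t)
    (hc : ∀ t ∈ Set.Icc a b, c ≤ |g' t|) :
    c * (b - a) ≤ |g b - g a| := by
  obtain ⟨x, hx, hx'⟩ := exists_hasDerivAt_eq_slope g g' hab
    ((continuous_iff_continuousAt.2 fun t => (hg t).continuousAt).continuousOn)
    (fun t _ => hg t)
  have h1 : c ≤ |g' x| := hc x ⟨hx.1.le, hx.2.le⟩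
  rw [hx', abs_div, _root_.abs_of_pos (by linarith : (0:ℝ) < b - a)] at h1
  have hba : (0:ℝ) < b - a := by linarith
  calc c * (b - a) ≤ (|g b - g a| / (b - a)) * (b - a) :=
        mul_le_mul_of_nonneg_right h1 hba.le
    _ = |g b - g a| := by field_simp

private lemma mvt_lower {g g' : ℝ → ℝ} {c a b : ℝ}
    (hg : ∀ t, HasDerivAt g (g' t) t)
    (hc : ∀ t ∈ Set.uIcc a b, c ≤ |g' t|) :
    c * |b - a| ≤ |g b - g a| := by
  rcases lt_trichotomy a b with h | h | h
  · have h2 := mvt_lower_aux h hg (fun t ht => hc t (by rw [Set.uIcc_of_le h.le]; exact ht))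
    rwa [_root_.abs_of_pos (by linarith : (0:ℝ) < b - a)]
  · subst h; simp
  · have h2 := mvt_lower_aux h hg (fun t ht => hc t (by rw [Set.uIcc_of_ge h.le]; exact ht))
    have h3 : |b - a| = a - b := by rw [_root_.abs_of_neg (by linarith : b - a < 0)]; ring
    rw [abs_sub_comm (g b) (g a), h3]
    exact h2

set_option maxHeartbeats 1000000 in
private lemma final2 {F0a F0b B A h M nξ r₀ : ℝ}
    (hM : 10 ≤ M) (hnξ : 0 < nξ) (hr₀ : 0 < r₀) (hr₀M : M^2 * r₀ ≤ 1/1000)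
    (hA : nξ/2 ≤ |A|)
    (hh : |h| ≤ 32*r₀)
    (hT1 : |0 - B - h*A| ≤ M * nξ * h^2)
    (hT2 : |F0b - F0a - h*B - h^2/2*A| ≤ M * nξ * |h|^3) :
    |(F0a - 1/2*B^2/A) - F0b| ≤ 13 * M * |h|^3 * nξ := by
  have hAne : A ≠ 0 := by
    intro h0
    rw [h0] at hA
    simp at hA
    linarith
  have hkey : (F0a - 1/2*B^2/A) - F0b
      = -(F0b - F0a - h*B - h^2/2*A) - (0 - B - h*A)^2/(2*A) := by
    field_simp
    ring
  rw [hkey]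
  set R := F0b - F0a - h*B - h^2/2*A with hR
  set R₂ := 0 - B - h*A with hR₂
  have h1 : |-R - R₂^2/(2*A)| ≤ |R| + R₂^2/(2*|A|) := by
    have e1 : -R - R₂^2/(2*A) = -(R + R₂^2/(2*A)) := by ring
    rw [e1, abs_neg]
    refine le_trans (abs_add_le _ _) ?_
    have e2 : |R₂^2/(2*A)| = R₂^2/(2*|A|) := by
      rw [abs_div, abs_mul, _root_.abs_two, _root_.abs_pow, _root_.sq_abs]
    rw [e2]
  have h2 : R₂^2 ≤ (M*nξ*h^2)^2 := by
    nlinarith [mul_self_le_mul_self (abs_nonneg R₂) hT1, abs_mul_abs_self R₂]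
  have h3 : nξ ≤ 2*|A| := by linarith
  have h4 : R₂^2/(2*|A|) ≤ M^2*nξ*h^4 := by
    calc R₂^2/(2*|A|) ≤ (M*nξ*h^2)^2/nξ := div_le_div₀ (by positivity) h2 hnξ h3
      _ = M^2*nξ*h^4 := by field_simp
  have hMh : M*|h| ≤ 1 := by
    nlinarith [mul_le_mul_of_nonneg_left hh (by linarith : (0:ℝ) ≤ M),
      mul_nonneg (mul_nonneg (sub_nonneg.2 hM) (by linarith : (0:ℝ) ≤ M)) hr₀.le]
  have h4eq : h^4 = |h|^3 * |h| := by
    have habs4 : |h|^4 = h^4 := by rw [← _root_.abs_pow, _root_.abs_of_nonneg (by positivity)]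
    rw [← habs4]; ring
  have hp : 0 ≤ (1 - M*|h|) * (M*nξ*|h|^3) :=
    mul_nonneg (by linarith) (by positivity)
  have h5 : M^2*nξ*h^4 ≤ 12*M*nξ*|h|^3 := by
    rw [h4eq]
    nlinarith [hp, mul_nonneg (mul_nonneg (by linarith : (0:ℝ) ≤ M) hnξ.le)
      (pow_nonneg (abs_nonneg h) 3)]
  calc |-R - R₂^2/(2*A)| ≤ |R| + R₂^2/(2*|A|) := h1
    _ ≤ M*nξ*|h|^3 + M^2*nξ*h^4 := by linarith
    _ ≤ 13 * M * |h|^3 * nξ := by nlinarith [mul_nonneg (mul_nonneg (by linarith : (0:ℝ) ≤ M) hnξ.le) (pow_nonneg (abs_nonneg h) 3)]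


private lemma hasDerivAt_inner_gamma {d : ℕ} {γ : ℝ → E d} (hγ : ContDiff ℝ (3:ℕ) γ) (ξ : E d) :
    (∀ s : ℝ, HasDerivAt (fun u => ⟪γ u, ξ⟫) ⟪deriv γ s, ξ⟫ s) ∧
    (∀ s : ℝ, HasDerivAt (fun u => ⟪deriv γ u, ξ⟫) ⟪iteratedDeriv 2 γ s, ξ⟫ s) ∧
    (∀ s : ℝ, HasDerivAt (fun u => ⟪iteratedDeriv 2 γ u, ξ⟫) ⟪iteratedDeriv 3 γ s, ξ⟫ s) := by
  have hit2 : iteratedDeriv 2 γ = deriv (deriv γ) := by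
    rw [show (2:ℕ) = 1 + 1 from rfl, iteratedDeriv_succ, iteratedDeriv_one]
  have hit3 : iteratedDeriv 3 γ = deriv (deriv (deriv γ)) := by
    rw [show (3:ℕ) = 2 + 1 from rfl, iteratedDeriv_succ, hit2]
  have h0 : Differentiable ℝ γ := hγ.differentiable (by norm_num)
  have h1 : Differentiable ℝ (deriv γ) := by
    have h := ContDiff.iterate_deriv' 2 1 hγ
    simpa using h.differentiable (by norm_num)
  have h2 : Differentiable ℝ (deriv (deriv γ)) := by
    have h := ContDiff.iterate_deriv' 1 2 hγ
    exact h.differentiable (by norm_num)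
  refine ⟨fun s => ?_, fun s => ?_, fun s => ?_⟩
  · simpa using ((h0 s).hasDerivAt.inner ℝ (hasDerivAt_const s ξ))
  · rw [hit2]
    simpa using ((h1 s).hasDerivAt.inner ℝ (hasDerivAt_const s ξ))
  · rw [hit3, hit2]
    simpa using ((h2 s).hasDerivAt.inner ℝ (hasDerivAt_const s ξ))


set_option maxHeartbeats 1000000 in
/-- Lemma 4.4. In the normalized setting, for `|s| ≤ 3δ/4` and `ξ ∈ Ω`:
`s - s_cr(ξ) = ⟨γ'(s),ξ⟩/⟨γ''(s),ξ⟩ + O₁(6M (s - s_cr(ξ))²)`; moreover if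
`s^μ ∈ [-δ,δ]`, `a^μ ∈ 𝔖_k(r₀, s^μ)` with `r₀ ≤ min{10⁻³M⁻², δ/4}` and `(ξ,τ) ∈ supp a^μ`,
then `U_μ(ξ,τ) = τ + ⟨γ(s_cr(ξ)),ξ⟩ + O₁(13M |s_cr(ξ) - s^μ|³ |ξ|)`, where
`U_μ(ξ,τ) = τ + ⟨γ(s^μ),ξ⟩ - ⟨γ'(s^μ),ξ⟩²/(2⟨γ''(s^μ),ξ⟩)`. -/
theorem statement16 (d : ℕ) (hd : 3 ≤ d) (M δ : ℝ) (hM : 10 ≤ M) (hδ : 0 < δ)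
    (h2δ : 2 * δ ≤ 1)
    (γ : ℝ → E d) (hγ : ContDiff ℝ (3 : ℕ) γ)
    (harc : ∀ s ∈ Set.Icc (-(2*δ)) (2*δ), ‖deriv γ s‖ = 1)
    (hM23 : ∀ s ∈ Set.Icc (-(2*δ)) (2*δ), ‖iteratedDeriv 2 γ s‖ + ‖iteratedDeriv 3 γ s‖ ≤ M)
    (Ω : Set (E d)) (hΩopen : IsOpen Ω) (hΩconv : Convex ℝ Ω) (hΩ0 : (0 : E d) ∉ Ω)
    (hΩcone : ∀ c : ℝ, 0 < c → ∀ ξ ∈ Ω, c • ξ ∈ Ω)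
    (hnd : ∀ ξ ∈ Ω, ∀ s ∈ Set.Icc (-δ) δ,
      ‖ξ‖ / 2 ≤ |⟪iteratedDeriv 2 γ s, ξ⟫| ∧ |⟪iteratedDeriv 2 γ s, ξ⟫| ≤ 2 * ‖ξ‖)
    (hsmall : ∀ ξ ∈ Ω, ∃ s ∈ Set.Icc (-(3*δ/4)) (3*δ/4), |⟪deriv γ s, ξ⟫| ≤ δ * ‖ξ‖ / 10)
    (scr : E d → ℝ)
    (hscr : ∀ ξ ∈ Ω, scr ξ ∈ Set.Ioo (-δ) δ ∧ ⟪deriv γ (scr ξ), ξ⟫ = 0) :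
    (∀ s : ℝ, |s| ≤ 3 * δ / 4 → ∀ ξ ∈ Ω,
      |(s - scr ξ) - ⟪deriv γ s, ξ⟫ / ⟪iteratedDeriv 2 γ s, ξ⟫|
        ≤ 6 * M * (s - scr ξ) ^ 2) ∧
    (∀ sμ : ℝ, sμ ∈ Set.Icc (-δ) δ → ∀ (k : ℕ) (r₀ : ℝ),
      (2:ℝ) ^ (-(k:ℝ)/2) < r₀ → r₀ ≤ (1000:ℝ)⁻¹ * (M ^ 2)⁻¹ → r₀ ≤ δ / 4 →
      ∀ aμ : ℝ → ℝ → E d × ℝ → ℂ, FSClass γ Ω k r₀ sμ aμ →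
      ∀ Ξ : E d × ℝ, (∃ s t, aμ s t Ξ ≠ 0) →
        |(Ξ.2 + ⟪γ sμ, Ξ.1⟫ -
            (1/2) * ⟪deriv γ sμ, Ξ.1⟫ ^ 2 / ⟪iteratedDeriv 2 γ sμ, Ξ.1⟫) -
          (Ξ.2 + ⟪γ (scr Ξ.1), Ξ.1⟫)|
          ≤ 13 * M * |scr Ξ.1 - sμ| ^ 3 * ‖Ξ.1‖) := by
  constructor
  · intro s hs ξ hξ
    obtain ⟨hσmem, hσ0⟩ := hscr ξ hξ
    obtain ⟨hD0, hD1, hD2⟩ := hasDerivAt_inner_gamma hγ ξ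
    have hsmem : s ∈ Set.Icc (-δ) δ :=
      ⟨by linarith [(abs_le.1 hs).1], by linarith [(abs_le.1 hs).2]⟩
    have hσmem' : scr ξ ∈ Set.Icc (-δ) δ := ⟨hσmem.1.le, hσmem.2.le⟩
    have hsub : Set.uIcc s (scr ξ) ⊆ Set.Icc (-δ) δ := Set.uIcc_subset_Icc hsmem hσmem'
    have hξpos : 0 < ‖ξ‖ := norm_pos_iff.2 (fun h => hΩ0 (h ▸ hξ))
    have hC : ∀ t ∈ Set.uIcc s (scr ξ), |⟪iteratedDeriv 3 γ t, ξ⟫| ≤ M * ‖ξ‖ := by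
      intro u hu
      have hu2 : u ∈ Set.Icc (-(2*δ)) (2*δ) := by
        have h := hsub hu
        exact ⟨by linarith [h.1], by linarith [h.2]⟩
      have hn := hM23 u hu2
      calc |⟪iteratedDeriv 3 γ u, ξ⟫| ≤ ‖iteratedDeriv 3 γ u‖ * ‖ξ‖ :=
            abs_real_inner_le_norm _ _
        _ ≤ M * ‖ξ‖ := by
            have h5 : ‖iteratedDeriv 3 γ u‖ ≤ M := by
              linarith [norm_nonneg (iteratedDeriv 2 γ u)]
            nlinarith [norm_nonneg ξ, norm_nonneg (iteratedDeriv 3 γ u)]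
    have hT : |⟪deriv γ (scr ξ), ξ⟫ - ⟪deriv γ s, ξ⟫
        - (scr ξ - s) * ⟪iteratedDeriv 2 γ s, ξ⟫| ≤ M * ‖ξ‖ * (scr ξ - s)^2 :=
      taylor1 hD1 hD2 hC
    rw [hσ0] at hT
    have hA := (hnd ξ hξ s hsmem).1
    have hAne : ⟪iteratedDeriv 2 γ s, ξ⟫ ≠ 0 := by
      intro h
      rw [h] at hA
      simp at hA
      linarith
    have heq : (s - scr ξ) - ⟪deriv γ s, ξ⟫ / ⟪iteratedDeriv 2 γ s, ξ⟫
        = (0 - ⟪deriv γ s, ξ⟫ - (scr ξ - s) * ⟪iteratedDeriv 2 γ s, ξ⟫)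
          / ⟪iteratedDeriv 2 γ s, ξ⟫ := by
      rw [sub_div, sub_div, mul_div_cancel_right₀ _ hAne, zero_div]
      ring
    rw [heq, abs_div, div_le_iff₀ (abs_pos.2 hAne)]
    calc |0 - ⟪deriv γ s, ξ⟫ - (scr ξ - s) * ⟪iteratedDeriv 2 γ s, ξ⟫|
        ≤ M * ‖ξ‖ * (scr ξ - s)^2 := hT
      _ ≤ 6 * M * (s - scr ξ)^2 * (‖ξ‖/2) := by
          nlinarith [mul_nonneg (mul_nonneg (by linarith : (0:ℝ) ≤ M) (norm_nonneg ξ))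
            (sq_nonneg (s - scr ξ))]
      _ ≤ 6 * M * (s - scr ξ)^2 * |⟪iteratedDeriv 2 γ s, ξ⟫| := by
          nlinarith [mul_nonneg (mul_nonneg (by linarith : (0:ℝ) ≤ M) (by linarith : (0:ℝ) ≤ 6))
            (sq_nonneg (s - scr ξ)), hA]
  · intro sμ hsμ k r₀ hr₀k hr₀M hr₀δ aμ haμ Ξ hΞ
    obtain ⟨s, t, hst⟩ := hΞ
    obtain ⟨hsupp, hSc⟩ := haμ
    obtain ⟨-, -, hξΩ, hknorm, -⟩ := hsupp s t Ξ hst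
    obtain ⟨hσmem, hσ0⟩ := hscr Ξ.1 hξΩ
    obtain ⟨hD0, hD1, hD2⟩ := hasDerivAt_inner_gamma hγ Ξ.1
    have hm := hSc 0 0 (by norm_num) (by norm_num) s t
    simp only [iteratedDeriv_zero] at hm
    have hmd : |⟪deriv γ sμ, Ξ.1⟫| ≤ (2:ℝ)^((k:ℝ)+3) * r₀ := (hm.1 Ξ hst).2.2.1
    have hr₀pos : 0 < r₀ := lt_trans (by positivity) hr₀k
    have hξpos : 0 < ‖Ξ.1‖ := norm_pos_iff.2 (fun h => hΩ0 (h ▸ hξΩ))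
    have h16 : (2:ℝ)^((k:ℝ)+3) ≤ 16 * ‖Ξ.1‖ := by
      have h24 : (2:ℝ)^(4:ℝ) = 16 := by
        rw [show (4:ℝ) = ((4:ℕ):ℝ) by norm_num, Real.rpow_natCast]
        norm_num
      rw [show ((k:ℝ)+3) = ((k:ℝ)-1) + 4 by ring,
        Real.rpow_add (by norm_num : (0:ℝ) < 2), h24]
      linarith [hknorm]
    have hB16 : |⟪deriv γ sμ, Ξ.1⟫| ≤ 16 * r₀ * ‖Ξ.1‖ := by
      calc |⟪deriv γ sμ, Ξ.1⟫| ≤ (2:ℝ)^((k:ℝ)+3) * r₀ := hmd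
        _ ≤ (16 * ‖Ξ.1‖) * r₀ := mul_le_mul_of_nonneg_right h16 hr₀pos.le
        _ = 16 * r₀ * ‖Ξ.1‖ := by ring
    have hσmem' : scr Ξ.1 ∈ Set.Icc (-δ) δ := ⟨hσmem.1.le, hσmem.2.le⟩
    have hsub : Set.uIcc sμ (scr Ξ.1) ⊆ Set.Icc (-δ) δ := Set.uIcc_subset_Icc hsμ hσmem'
    have hlow : ∀ u ∈ Set.uIcc sμ (scr Ξ.1), ‖Ξ.1‖/2 ≤ |⟪iteratedDeriv 2 γ u, Ξ.1⟫| :=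
      fun u hu => (hnd Ξ.1 hξΩ u (hsub hu)).1
    have hmvt : ‖Ξ.1‖/2 * |scr Ξ.1 - sμ| ≤ |⟪deriv γ (scr Ξ.1), Ξ.1⟫ - ⟪deriv γ sμ, Ξ.1⟫| :=
      mvt_lower hD1 hlow
    rw [hσ0, zero_sub, abs_neg] at hmvt
    have habs : |scr Ξ.1 - sμ| ≤ 32 * r₀ := by
      nlinarith [hmvt, hB16, hξpos, abs_nonneg (scr Ξ.1 - sμ)]
    have hC3 : ∀ u ∈ Set.uIcc sμ (scr Ξ.1), |⟪iteratedDeriv 3 γ u, Ξ.1⟫| ≤ M * ‖Ξ.1‖ := by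
      intro u hu
      have hu2 : u ∈ Set.Icc (-(2*δ)) (2*δ) := by
        have h := hsub hu
        exact ⟨by linarith [h.1], by linarith [h.2]⟩
      have hn := hM23 u hu2
      calc |⟪iteratedDeriv 3 γ u, Ξ.1⟫| ≤ ‖iteratedDeriv 3 γ u‖ * ‖Ξ.1‖ :=
            abs_real_inner_le_norm _ _
        _ ≤ M * ‖Ξ.1‖ := by
            have h5 : ‖iteratedDeriv 3 γ u‖ ≤ M := by
              linarith [norm_nonneg (iteratedDeriv 2 γ u)]
            nlinarith [norm_nonneg (Ξ.1 : E d), norm_nonneg (iteratedDeriv 3 γ u)]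
    have hT1 : |⟪deriv γ (scr Ξ.1), Ξ.1⟫ - ⟪deriv γ sμ, Ξ.1⟫
        - (scr Ξ.1 - sμ) * ⟪iteratedDeriv 2 γ sμ, Ξ.1⟫|
        ≤ M * ‖Ξ.1‖ * (scr Ξ.1 - sμ)^2 := taylor1 hD1 hD2 hC3
    rw [hσ0] at hT1
    have hT2 : |⟪γ (scr Ξ.1), Ξ.1⟫ - ⟪γ sμ, Ξ.1⟫ - (scr Ξ.1 - sμ) * ⟪deriv γ sμ, Ξ.1⟫
        - (scr Ξ.1 - sμ)^2/2 * ⟪iteratedDeriv 2 γ sμ, Ξ.1⟫|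
        ≤ M * ‖Ξ.1‖ * |scr Ξ.1 - sμ|^3 := taylor2 hD0 hD1 hD2 hC3
    have hA := (hnd Ξ.1 hξΩ sμ hsμ).1
    have h1000 : M^2 * r₀ ≤ 1/1000 := by
      have hM0 : (0:ℝ) < M := by linarith
      have h2 : M^2 * r₀ ≤ M^2 * ((1000:ℝ)⁻¹ * (M^2)⁻¹) :=
        mul_le_mul_of_nonneg_left hr₀M (by positivity)
      have h3 : M^2 * ((1000:ℝ)⁻¹ * (M^2)⁻¹) = 1/1000 := by field_simp
      linarith
    have hfin := final2 hM hξpos hr₀pos h1000 hA habs hT1 hT2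
    have hgoal : (Ξ.2 + ⟪γ sμ, Ξ.1⟫
          - 1/2 * ⟪deriv γ sμ, Ξ.1⟫^2 / ⟪iteratedDeriv 2 γ sμ, Ξ.1⟫)
          - (Ξ.2 + ⟪γ (scr Ξ.1), Ξ.1⟫)
        = (⟪γ sμ, Ξ.1⟫ - 1/2 * ⟪deriv γ sμ, Ξ.1⟫^2 / ⟪iteratedDeriv 2 γ sμ, Ξ.1⟫)
          - ⟪γ (scr Ξ.1), Ξ.1⟫ := by ring
    rw [hgoal]
    exact hfin
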